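/- Let R be a ring and I an ideal of R containing a nil ideal N of R (with N ⊆ I). Then I is a weak nil clean ideal of R if and only if I/N is a weak nil clean ideal of R/N. -/

import Mathlib

/-- For a nil ideal `N ⊆ I`, `I` is weak nil clean in `R` iff `I/N` is weak
nil clean in `R/N`. -/
theorem weakNilCleanIdeal_iff_quotient_by_nil {R : Type*} [Ring R]
    (N I : TwoSidedIdeal R) (hN : ∀ x ∈ N, IsNilpotent x) (hNI : ∀ x ∈ N, x ∈ I) :
    (∀ x ∈ I, ∃ e n : R, IsIdempotentElem e ∧ IsNilpotent n ∧ (x = e + n ∨ x = -e + n)) ↔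
    (∀ x ∈ I, ∃ e n : N.ringCon.Quotient, IsIdempotentElem e ∧ IsNilpotent n ∧
      (N.ringCon.mk' x = e + n ∨ N.ringCon.mk' x = -e + n)) := by
  have hker : ∀ x ∈ RingHom.ker N.ringCon.mk', IsNilpotent x := by
    intro x hx
    apply hN
    rw [RingHom.mem_ker] at hx
    have : N.ringCon x 0 := Quotient.eq''.mp hx
    simpa using (N.rel_iff x 0).mp this
  constructor
  · intro h x hx
    obtain ⟨e, n, he, hn, hc⟩ := h x hx
    exact ⟨N.ringCon.mk' e, N.ringCon.mk' n, he.map N.ringCon.mk', hn.map N.ringCon.mk',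
      by rcases hc with h | h <;> [left; right] <;> rw [h] <;> simp⟩
  · intro h x hx
    obtain ⟨e, n, he, hn, hc⟩ := h x hx
    obtain ⟨e', he', rfl⟩ := exists_isIdempotentElem_eq_of_ker_isNilpotent N.ringCon.mk' hker e
      ⟨Quot.out e, Quot.out_eq e⟩ he
    obtain ⟨b, rfl⟩ : ∃ b, N.ringCon.mk' b = n := ⟨Quot.out n, Quot.out_eq n⟩
    rcases hc with hc | hc
    · refine ⟨e', x - e', he', ?_, Or.inl (by abel)⟩
      -- x - e' maps to n which is nilpotent; kernel nil ⇒ nilpotent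
      obtain ⟨k, hk⟩ := hn
      have : (x - e') ^ k ∈ RingHom.ker N.ringCon.mk' := by
        rw [RingHom.mem_ker, map_pow, map_sub, hc]
        simpa using hk
      obtain ⟨m, hm⟩ := hker _ this
      exact ⟨k * m, by rw [pow_mul, hm]⟩
    · refine ⟨e', x + e', he', ?_, Or.inr (by abel)⟩
      obtain ⟨k, hk⟩ := hn
      have : (x + e') ^ k ∈ RingHom.ker N.ringCon.mk' := by
        rw [RingHom.mem_ker, map_pow, map_add, hc]
        simpa using hk
      obtain ⟨m, hm⟩ := hker _ this
      exact ⟨k * m, by rw [pow_mul, hm]⟩
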